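/- For all a, b ∈ ℝ²: |b − a| ≤ (1 + |b|)·Q(a)·|ν(b) − ν(a)|, where Q(a) = √(1+|a|²) and ν(a) = (−a, 1)/Q(a) ∈ ℝ³. -/

import Mathlib

open Matrix

/-- `Q a = √(1+|a|²)` for `a ∈ ℝ²`. -/
noncomputable def Q2 (a : Fin 2 → ℝ) : ℝ := Real.sqrt (1 + a ⬝ᵥ a)

/-- Euclidean norm of a vector in `ℝⁿ`. -/
noncomputable def enorm2 {n : ℕ} (v : Fin n → ℝ) : ℝ := Real.sqrt (v ⬝ᵥ v)

/-- Upward unit normal `ν(a) = (−a, 1)/Q(a) ∈ ℝ³`. -/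
noncomputable def nuv (a : Fin 2 → ℝ) : Fin 3 → ℝ := (Q2 a)⁻¹ • ![-(a 0), -(a 1), 1]

lemma Q2_pos (a : Fin 2 → ℝ) : 0 < Q2 a := by
  apply Real.sqrt_pos.mpr
  have h : 0 ≤ a ⬝ᵥ a := by
    simp only [dotProduct, Fin.sum_univ_two]
    nlinarith [mul_self_nonneg (a 0), mul_self_nonneg (a 1)]
  linarith

lemma enorm2_smul {n} (c : ℝ) (v : Fin n → ℝ) : enorm2 (c • v) = |c| * enorm2 v := by
  unfold enorm2
  rw [smul_dotProduct, dotProduct_smul, smul_eq_mul, smul_eq_mul, ← mul_assoc, ← sq,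
    Real.sqrt_mul (sq_nonneg c), Real.sqrt_sq_eq_abs]

lemma cauchy2 (x y x' y' : ℝ) :
    x * x' + y * y' ≤ Real.sqrt (x ^ 2 + y ^ 2) * Real.sqrt (x' ^ 2 + y' ^ 2) := by
  have h := Real.sq_sqrt (show (0:ℝ) ≤ x ^ 2 + y ^ 2 by positivity)
  have h' := Real.sq_sqrt (show (0:ℝ) ≤ x' ^ 2 + y' ^ 2 by positivity)
  have h0 := Real.sqrt_nonneg (x ^ 2 + y ^ 2)
  have h0' := Real.sqrt_nonneg (x' ^ 2 + y' ^ 2)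
  nlinarith [sq_nonneg (x * y' - y * x'), mul_nonneg h0 h0',
    sq_nonneg (Real.sqrt (x ^ 2 + y ^ 2) * Real.sqrt (x' ^ 2 + y' ^ 2) - x * x' - y * y')]

lemma tri2 (x y x' y' : ℝ) :
    Real.sqrt ((x + x') ^ 2 + (y + y') ^ 2) ≤
      Real.sqrt (x ^ 2 + y ^ 2) + Real.sqrt (x' ^ 2 + y' ^ 2) := by
  have hs := Real.sq_sqrt (show (0:ℝ) ≤ x ^ 2 + y ^ 2 by positivity)
  have hs' := Real.sq_sqrt (show (0:ℝ) ≤ x' ^ 2 + y' ^ 2 by positivity)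
  have hc := cauchy2 x y x' y'
  have h2 : (x + x') ^ 2 + (y + y') ^ 2 ≤
      (Real.sqrt (x ^ 2 + y ^ 2) + Real.sqrt (x' ^ 2 + y' ^ 2)) ^ 2 := by nlinarith
  calc Real.sqrt ((x + x') ^ 2 + (y + y') ^ 2)
      ≤ Real.sqrt ((Real.sqrt (x ^ 2 + y ^ 2) + Real.sqrt (x' ^ 2 + y' ^ 2)) ^ 2) :=
        Real.sqrt_le_sqrt h2
    _ = _ := Real.sqrt_sq (by positivity)

/-- `|b − a| ≤ (1 + |b|) Q(a) |ν(b) − ν(a)|`. -/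
theorem grad_diff_le_normal_diff (a b : Fin 2 → ℝ) :
    enorm2 (b - a) ≤ (1 + enorm2 b) * Q2 a * enorm2 (nuv b - nuv a) := by
  have hQa := Q2_pos a
  have hQb := Q2_pos b
  set Qa := Q2 a with hQadef
  set Qb := Q2 b with hQbdef
  set N := enorm2 (nuv b - nuv a) with hN
  set w0 : ℝ := Qb * a 0 - Qa * b 0 with hw0
  set w1 : ℝ := Qb * a 1 - Qa * b 1 with hw1
  set w2 : ℝ := Qa - Qb with hw2
  have hNnonneg : 0 ≤ N := Real.sqrt_nonneg _
  have hbnonneg : 0 ≤ enorm2 b := Real.sqrt_nonneg _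
  -- the scaled normal difference
  have hw : (Qa * Qb) • (nuv b - nuv a) = ![w0, w1, w2] := by
    funext i
    have ha : Qa ≠ 0 := ne_of_gt hQa
    have hb : Qb ≠ 0 := ne_of_gt hQb
    fin_cases i <;>
      simp only [Pi.smul_apply, Pi.sub_apply, nuv, ← hQadef, ← hQbdef, smul_eq_mul,
        Matrix.cons_val_zero, Matrix.cons_val_one, Matrix.head_cons, hw0, hw1, hw2,
        Matrix.cons_val_fin_one, Fin.mk_zero, Fin.mk_one, Fin.reduceFinMk, Matrix.cons_val_two,
          Matrix.tail_cons] <;>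
      field_simp <;> ring
  set S : ℝ := Real.sqrt (w0 ^ 2 + w1 ^ 2 + w2 ^ 2) with hS
  have hSeq : Qa * Qb * N = S := by
    have h1 : enorm2 ((Qa * Qb) • (nuv b - nuv a)) = (Qa * Qb) * N := by
      rw [enorm2_smul, abs_of_pos (by positivity)]
    rw [← h1, hw]
    simp only [enorm2, dotProduct, Fin.sum_univ_three, hS]
    congr 1
    simp [Matrix.cons_val_zero, Matrix.cons_val_one, Matrix.head_cons]
    ring
  have hSnonneg : 0 ≤ S := Real.sqrt_nonneg _
  -- component bounds
  have h2 : |w2| ≤ S := by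
    rw [hS, ← Real.sqrt_sq_eq_abs]
    apply Real.sqrt_le_sqrt
    nlinarith [sq_nonneg w0, sq_nonneg w1]
  have h01 : Real.sqrt (w0 ^ 2 + w1 ^ 2) ≤ S := by
    apply Real.sqrt_le_sqrt
    nlinarith [sq_nonneg w2]
  -- norms as explicit sqrts
  have hd : enorm2 (b - a) = Real.sqrt ((b 0 - a 0) ^ 2 + (b 1 - a 1) ^ 2) := by
    simp only [enorm2, dotProduct, Fin.sum_univ_two, Pi.sub_apply]
    congr 1; ring
  have hbn : enorm2 b = Real.sqrt (b 0 ^ 2 + b 1 ^ 2) := by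
    simp only [enorm2, dotProduct, Fin.sum_univ_two]
    congr 1; ring
  -- main chain
  have key : Qb * enorm2 (b - a) ≤ S * (1 + enorm2 b) := by
    have e1 : Qb * enorm2 (b - a) =
        Real.sqrt ((-w0 + (Qb - Qa) * b 0) ^ 2 + (-w1 + (Qb - Qa) * b 1) ^ 2) := by
      rw [hd, show (-w0 + (Qb - Qa) * b 0) ^ 2 + (-w1 + (Qb - Qa) * b 1) ^ 2 =
          Qb ^ 2 * ((b 0 - a 0) ^ 2 + (b 1 - a 1) ^ 2) by rw [hw0, hw1]; ring,
        Real.sqrt_mul (sq_nonneg Qb), Real.sqrt_sq hQb.le]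
    have e2 : Real.sqrt (((Qb - Qa) * b 0) ^ 2 + ((Qb - Qa) * b 1) ^ 2) =
        |w2| * enorm2 b := by
      rw [hbn, show ((Qb - Qa) * b 0) ^ 2 + ((Qb - Qa) * b 1) ^ 2 =
          w2 ^ 2 * (b 0 ^ 2 + b 1 ^ 2) by rw [hw2]; ring,
        Real.sqrt_mul (sq_nonneg w2), Real.sqrt_sq_eq_abs]
    calc Qb * enorm2 (b - a)
        = Real.sqrt ((-w0 + (Qb - Qa) * b 0) ^ 2 + (-w1 + (Qb - Qa) * b 1) ^ 2) := e1
      _ ≤ Real.sqrt ((-w0) ^ 2 + (-w1) ^ 2) +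
            Real.sqrt (((Qb - Qa) * b 0) ^ 2 + ((Qb - Qa) * b 1) ^ 2) := tri2 _ _ _ _
      _ = Real.sqrt (w0 ^ 2 + w1 ^ 2) + |w2| * enorm2 b := by
          rw [e2, show (-w0) ^ 2 + (-w1) ^ 2 = w0 ^ 2 + w1 ^ 2 by ring]
      _ ≤ S + S * enorm2 b :=
          add_le_add h01 (mul_le_mul_of_nonneg_right h2 hbnonneg)
      _ = S * (1 + enorm2 b) := by ring
  rw [← hSeq] at key
  have := (mul_le_mul_iff_right₀ hQb).mp (by linarith [key] : Qb * enorm2 (b - a) ≤ Qb * ((1 + enorm2 b) * Qa * N))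
  exact this
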